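/- Let m^(n), m ∈ ℓ^∞ with ‖m^(n) − m‖_{p₁} → 0, and let Λ^(n), Λ be pg-Bessel sequences for X₂ with uniformly bounded Bessel bounds B₁ = sup_n B_{Λ^(n)} < ∞, and Θ^(n), Θ qg-Bessel sequences for X₁^* with B₂ = sup_n B_{Θ^(n)} < ∞. If m ∈ ℓ^{p₁}, (Σ_i ‖Λ^(n)_i − Λ_i‖^{q₁})^{1/q₁} → 0 and (Σ_i ‖Θ^(n)_i − Θ_i‖^{q₁})^{1/q₁} → 0, then ‖M_{m^(n),Λ^(n),Θ^(n)} − M_{m,Λ,Θ}‖ → 0. -/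

import Mathlib

open NormedSpace Filter

/-- The Banach-space adjoint (dual map) of a continuous linear map. -/
noncomputable def opAdj {X Y : Type*} [NormedAddCommGroup X] [NormedSpace ℝ X]
    [NormedAddCommGroup Y] [NormedSpace ℝ Y] (T : X →L[ℝ] Y) :
    StrongDual ℝ Y →L[ℝ] StrongDual ℝ X :=
  (ContinuousLinearMap.compL ℝ X Y ℝ).flip T

private lemma opAdj_apply {X Y : Type*} [NormedAddCommGroup X] [NormedSpace ℝ X]
    [NormedAddCommGroup Y] [NormedSpace ℝ Y] (T : X →L[ℝ] Y) (f : StrongDual ℝ Y) (x : X) :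
    opAdj T f x = f (T x) := rfl

/-- coordinatewise bound from an `ℓ^p` bound -/
private lemma coord_le_of_lp {a : ℕ → ℝ} {p C : ℝ} (hp : 0 < p) (h0 : ∀ i, 0 ≤ a i)
    (hs : Summable fun i => a i ^ p) (hC : (∑' i, a i ^ p) ^ (1 / p) ≤ C) (i : ℕ) :
    a i ≤ C := by
  have h1 : a i ^ p ≤ ∑' j, a j ^ p :=
    hs.le_tsum i fun j _ => Real.rpow_nonneg (h0 j) p
  have h2 : (a i ^ p) ^ (1 / p) ≤ (∑' j, a j ^ p) ^ (1 / p) :=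
    Real.rpow_le_rpow (Real.rpow_nonneg (h0 i) p) h1 (by positivity)
  have e : (a i ^ p) ^ (1 / p) = a i := by
    rw [one_div, Real.rpow_rpow_inv (h0 i) hp.ne']
  rw [e] at h2
  exact h2.trans hC

/-- finite partial `ℓ^p` sums obey the same bound as the total sum -/
private lemma finset_lp_le {a : ℕ → ℝ} {p C : ℝ} (hp : 0 < p) (h0 : ∀ i, 0 ≤ a i)
    (hs : Summable fun i => a i ^ p) (hC : (∑' i, a i ^ p) ^ (1 / p) ≤ C) (t : Finset ℕ) :
    (∑ i ∈ t, a i ^ p) ^ (1 / p) ≤ C := by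
  refine le_trans (Real.rpow_le_rpow
    (Finset.sum_nonneg fun i _ => Real.rpow_nonneg (h0 i) p)
    (hs.sum_le_tsum t (fun i _ => Real.rpow_nonneg (h0 i) p)) (by positivity)) hC

/-- a summability criterion from norm bounds on arbitrary finite partial sums -/
private lemma summable_of_partial_bound {E : Type*} [NormedAddCommGroup E]
    [CompleteSpace E] {f : ℕ → E} {c : ℕ → ℝ} (hc : Summable c) (hc0 : ∀ i, 0 ≤ c i)
    {K r : ℝ} (hK : 0 ≤ K) (hr : 0 < r)
    (h : ∀ t : Finset ℕ, ‖∑ i ∈ t, f i‖ ≤ K * (∑ i ∈ t, c i) ^ r) : Summable f := by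
  rw [summable_iff_vanishing_norm]
  intro ε hε
  set δ : ℝ := (ε / (K + 1)) ^ r⁻¹ with hδdef
  have hδ : 0 < δ := Real.rpow_pos_of_pos (by positivity) _
  obtain ⟨s, hs⟩ := summable_iff_vanishing_norm.mp hc δ hδ
  refine ⟨s, fun t ht => ?_⟩
  have hsn : 0 ≤ ∑ i ∈ t, c i := Finset.sum_nonneg fun i _ => hc0 i
  have h1 : ∑ i ∈ t, c i < δ := by
    have := hs t ht
    rwa [Real.norm_eq_abs, abs_of_nonneg hsn] at this
  have h2 : (∑ i ∈ t, c i) ^ r ≤ δ ^ r := Real.rpow_le_rpow hsn h1.le hr.le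
  have h3 : δ ^ r = ε / (K + 1) := Real.rpow_inv_rpow (by positivity) hr.ne'
  have h4 : K * (ε / (K + 1)) < ε := by
    rw [mul_div_assoc']
    rw [div_lt_iff₀ (by positivity)]
    nlinarith
  calc ‖∑ i ∈ t, f i‖ ≤ K * (∑ i ∈ t, c i) ^ r := h t
    _ ≤ K * δ ^ r := by gcongr
    _ = K * (ε / (K + 1)) := by rw [h3]
    _ < ε := h4

/-- norm estimate for finite partial sums of the multiplier series -/
private lemma multiplier_partial_sum_bound {X₁ X₂ : Type*}
    [NormedAddCommGroup X₁] [NormedSpace ℝ X₁]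
    [NormedAddCommGroup X₂] [NormedSpace ℝ X₂]
    {Y : ℕ → Type*} [∀ i, NormedAddCommGroup (Y i)] [∀ i, NormedSpace ℝ (Y i)]
    {p q : ℝ} (hpq : p.HolderConjugate q)
    (Λ : ∀ i, X₂ →L[ℝ] Y i) (Θ : ∀ i, StrongDual ℝ X₁ →L[ℝ] StrongDual ℝ (Y i))
    (m : ℕ → ℝ) {M B : ℝ} (hM : ∀ i, |m i| ≤ M) (hB0 : 0 ≤ B)
    (hB : ∀ (t : Finset ℕ) (x : X₂), (∑ i ∈ t, ‖Λ i x‖ ^ p) ^ (1 / p) ≤ B * ‖x‖)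
    (g : StrongDual ℝ X₁) (t : Finset ℕ) :
    ‖∑ i ∈ t, m i • opAdj (Λ i) (Θ i g)‖ ≤
      M * B * (∑ i ∈ t, ‖Θ i g‖ ^ q) ^ (1 / q) := by
  have hM0 : 0 ≤ M := (abs_nonneg _).trans (hM 0)
  have hS0 : (0:ℝ) ≤ (∑ i ∈ t, ‖Θ i g‖ ^ q) ^ (1 / q) :=
    Real.rpow_nonneg (Finset.sum_nonneg fun i _ => Real.rpow_nonneg (norm_nonneg _) q) _
  refine ContinuousLinearMap.opNorm_le_bound _ (by positivity) fun x => ?_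
  have key : (∑ i ∈ t, m i • opAdj (Λ i) (Θ i g)) x
      = ∑ i ∈ t, m i * (Θ i g) (Λ i x) := by
    simp [ContinuousLinearMap.sum_apply, opAdj_apply, smul_eq_mul]
  rw [key, Real.norm_eq_abs]
  calc |∑ i ∈ t, m i * (Θ i g) (Λ i x)| ≤ ∑ i ∈ t, |m i * (Θ i g) (Λ i x)| :=
        Finset.abs_sum_le_sum_abs _ _
    _ ≤ ∑ i ∈ t, M * (‖Θ i g‖ * ‖Λ i x‖) := by
        refine Finset.sum_le_sum fun i _ => ?_
        rw [abs_mul]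
        have h1 : |(Θ i g) (Λ i x)| ≤ ‖Θ i g‖ * ‖Λ i x‖ := by
          simpa [Real.norm_eq_abs] using (Θ i g).le_opNorm (Λ i x)
        exact mul_le_mul (hM i) h1 (abs_nonneg _) hM0
    _ = M * ∑ i ∈ t, ‖Θ i g‖ * ‖Λ i x‖ := by rw [Finset.mul_sum]
    _ ≤ M * ((∑ i ∈ t, ‖Θ i g‖ ^ q) ^ (1 / q) * (∑ i ∈ t, ‖Λ i x‖ ^ p) ^ (1 / p)) := by
        refine mul_le_mul_of_nonneg_left ?_ hM0
        exact Real.inner_le_Lp_mul_Lq_of_nonneg t hpq.symm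
          (fun i _ => norm_nonneg _) (fun i _ => norm_nonneg _)
    _ ≤ M * ((∑ i ∈ t, ‖Θ i g‖ ^ q) ^ (1 / q) * (B * ‖x‖)) := by
        refine mul_le_mul_of_nonneg_left (mul_le_mul_of_nonneg_left (hB t x) hS0) hM0
    _ = M * B * (∑ i ∈ t, ‖Θ i g‖ ^ q) ^ (1 / q) * ‖x‖ := by ring

/-- bound on the absolute value of a tsum via a summable dominating series -/
private lemma abs_tsum_le_of_dom {f u : ℕ → ℝ} (hu : Summable u) (h : ∀ i, |f i| ≤ u i)
    {Kb : ℝ} (hK : ∑' i, u i ≤ Kb) : |∑' i, f i| ≤ Kb := by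
  have hfn : Summable fun i => ‖f i‖ := by
    refine hu.of_nonneg_of_le (fun i => norm_nonneg _) fun i => ?_
    simpa [Real.norm_eq_abs] using h i
  calc |∑' i, f i| = ‖∑' i, f i‖ := (Real.norm_eq_abs _).symm
    _ ≤ ∑' i, ‖f i‖ := norm_tsum_le_tsum_norm hfn
    _ ≤ ∑' i, u i := by
        refine Summable.tsum_le_tsum (fun i => ?_) hfn hu
        simpa [Real.norm_eq_abs] using h i
    _ ≤ Kb := hK

set_option maxHeartbeats 1600000 in
/-- joint continuity of the multiplier in all three parameters: if
`‖m⁽ⁿ⁾ − m‖_{p₁} → 0`, `m ∈ ℓ^{p₁}`, the pg-Bessel sequences `Λ⁽ⁿ⁾` (uniform bound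
`B₁`) converge to `Λ` and the qg-Bessel sequences `Θ⁽ⁿ⁾` (uniform bound `B₂`)
converge to `Θ` in the `ℓ^{q₁}` sense, then
`‖M_{m⁽ⁿ⁾,Λ⁽ⁿ⁾,Θ⁽ⁿ⁾} − M_{m,Λ,Θ}‖ → 0`. -/
theorem multiplier_continuous_in_all_parameters
    {X₁ X₂ : Type*} [NormedAddCommGroup X₁] [NormedSpace ℝ X₁] [CompleteSpace X₁]
    [NormedAddCommGroup X₂] [NormedSpace ℝ X₂] [CompleteSpace X₂]
    {Y : ℕ → Type*} [∀ i, NormedAddCommGroup (Y i)] [∀ i, NormedSpace ℝ (Y i)]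
    [∀ i, CompleteSpace (Y i)]
    (hreflX₁ : Function.Surjective (inclusionInDoubleDual ℝ X₁))
    (hreflX₂ : Function.Surjective (inclusionInDoubleDual ℝ X₂))
    (hreflY : ∀ i, Function.Surjective (inclusionInDoubleDual ℝ (Y i)))
    (p q : ℝ) (hp : 1 < p) (hpq : 1 / p + 1 / q = 1)
    (p₁ q₁ : ℝ) (hp₁ : 1 < p₁) (hpq₁ : 1 / p₁ + 1 / q₁ = 1)
    (Λ : ∀ i, X₂ →L[ℝ] Y i) (Λn : ℕ → ∀ i, X₂ →L[ℝ] Y i)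
    (Θ : ∀ i, StrongDual ℝ X₁ →L[ℝ] StrongDual ℝ (Y i))
    (Θn : ℕ → ∀ i, StrongDual ℝ X₁ →L[ℝ] StrongDual ℝ (Y i))
    (BΛ BΘ B₁ B₂ : ℝ) (hBΛ : 0 < BΛ) (hBΘ : 0 < BΘ) (hB₁ : 0 < B₁) (hB₂ : 0 < B₂)
    (hΛ : ∀ x : X₂, Summable (fun i => ‖Λ i x‖ ^ p) ∧
      (∑' i, ‖Λ i x‖ ^ p) ^ (1 / p) ≤ BΛ * ‖x‖)
    (hΘ : ∀ g : StrongDual ℝ X₁, Summable (fun i => ‖Θ i g‖ ^ q) ∧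
      (∑' i, ‖Θ i g‖ ^ q) ^ (1 / q) ≤ BΘ * ‖g‖)
    -- uniform Bessel bounds `B₁ = sup B_{Λ⁽ⁿ⁾}`, `B₂ = sup B_{Θ⁽ⁿ⁾}`
    (hΛn : ∀ n, ∀ x : X₂, Summable (fun i => ‖Λn n i x‖ ^ p) ∧
      (∑' i, ‖Λn n i x‖ ^ p) ^ (1 / p) ≤ B₁ * ‖x‖)
    (hΘn : ∀ n, ∀ g : StrongDual ℝ X₁, Summable (fun i => ‖Θn n i g‖ ^ q) ∧
      (∑' i, ‖Θn n i g‖ ^ q) ^ (1 / q) ≤ B₂ * ‖g‖)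
    (m : ℕ → ℝ) (mn : ℕ → ℕ → ℝ)
    (hm : Summable (fun i => |m i| ^ p₁)) (hmbd : ∃ M, ∀ i, |m i| ≤ M)
    (hmn : ∀ n, ∃ M, ∀ i, |mn n i| ≤ M)
    (hmdiffsum : ∀ n, Summable (fun i => |mn n i - m i| ^ p₁))
    (hmconv : Tendsto (fun n => (∑' i, |mn n i - m i| ^ p₁) ^ (1 / p₁))
      atTop (nhds 0))
    (hΛdiffsum : ∀ n, Summable (fun i => ‖Λn n i - Λ i‖ ^ q₁))
    (hΛconv : Tendsto (fun n => (∑' i, ‖Λn n i - Λ i‖ ^ q₁) ^ (1 / q₁))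
      atTop (nhds 0))
    (hΘdiffsum : ∀ n, Summable (fun i => ‖Θn n i - Θ i‖ ^ q₁))
    (hΘconv : Tendsto (fun n => (∑' i, ‖Θn n i - Θ i‖ ^ q₁) ^ (1 / q₁))
      atTop (nhds 0)) :
    ∃ C : ℕ → ℝ, Tendsto C atTop (nhds 0) ∧
      ∀ (n : ℕ) (g : StrongDual ℝ X₁),
        Summable (fun i => mn n i • opAdj (Λn n i) (Θn n i g)) ∧
        Summable (fun i => m i • opAdj (Λ i) (Θ i g)) ∧
        ‖(∑' i, mn n i • opAdj (Λn n i) (Θn n i g)) -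
            ∑' i, m i • opAdj (Λ i) (Θ i g)‖ ≤ C n * ‖g‖ := by
  have hpq' : p.HolderConjugate q := Real.holderConjugate_iff.mpr ⟨hp, by rw [← one_div, ← one_div]; exact hpq⟩
  have hpq₁' : p₁.HolderConjugate q₁ := Real.holderConjugate_iff.mpr ⟨hp₁, by rw [← one_div, ← one_div]; exact hpq₁⟩
  have hp0 : 0 < p := hpq'.pos
  have hq0 : 0 < q := hpq'.symm.pos
  have hp₁0 : 0 < p₁ := hpq₁'.pos
  have hq₁0 : 0 < q₁ := hpq₁'.symm.pos
  set Mp : ℝ := (∑' i, |m i| ^ p₁) ^ (1 / p₁) with hMp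
  have hMp0 : 0 ≤ Mp := Real.rpow_nonneg
    (tsum_nonneg fun i => Real.rpow_nonneg (abs_nonneg _) _) _
  have hmM : ∀ i, |m i| ≤ Mp :=
    coord_le_of_lp hp₁0 (fun i => abs_nonneg _) hm le_rfl
  set δm : ℕ → ℝ := fun n => (∑' i, |mn n i - m i| ^ p₁) ^ (1 / p₁) with hδm
  set δΛ : ℕ → ℝ := fun n => (∑' i, ‖Λn n i - Λ i‖ ^ q₁) ^ (1 / q₁) with hδΛ
  set δΘ : ℕ → ℝ := fun n => (∑' i, ‖Θn n i - Θ i‖ ^ q₁) ^ (1 / q₁) with hδΘ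
  have hδm0 : ∀ n, 0 ≤ δm n := fun n => Real.rpow_nonneg
    (tsum_nonneg fun i => Real.rpow_nonneg (abs_nonneg _) _) _
  have hδΛ0 : ∀ n, 0 ≤ δΛ n := fun n => Real.rpow_nonneg
    (tsum_nonneg fun i => Real.rpow_nonneg (norm_nonneg _) _) _
  have hδΘ0 : ∀ n, 0 ≤ δΘ n := fun n => show (0:ℝ) ≤ (∑' i, ‖Θn n i - Θ i‖ ^ q₁) ^ (1 / q₁) from Real.rpow_nonneg
    (tsum_nonneg fun i => Real.rpow_nonneg (norm_nonneg (Θn n i - Θ i)) _) _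
  refine ⟨fun n => B₁ * B₂ * δm n + B₂ * Mp * δΛ n + BΛ * Mp * δΘ n, ?_, fun n g => ?_⟩
  · have key : ∀ (f1 f2 f3 : ℕ → ℝ), Tendsto f1 atTop (nhds 0) →
        Tendsto f2 atTop (nhds 0) → Tendsto f3 atTop (nhds 0) →
        Tendsto (fun n => B₁ * B₂ * f1 n + B₂ * Mp * f2 n + BΛ * Mp * f3 n)
          atTop (nhds 0) := by
      intro f1 f2 f3 h1 h2 h3
      have h := ((h1.const_mul (B₁ * B₂)).add
        (h2.const_mul (B₂ * Mp))).add (h3.const_mul (BΛ * Mp))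
      simpa using h
    exact key _ _ _ hmconv hΛconv hΘconv
  · -- fix n and g
    obtain ⟨Mn₀, hMn₀⟩ := hmn n
    set Mn : ℝ := max Mn₀ 0 with hMndef
    have hMn : ∀ i, |mn n i| ≤ Mn := fun i => (hMn₀ i).trans (le_max_left _ _)
    have hMn0 : (0:ℝ) ≤ Mn := le_max_right _ _
    -- Summability of the two operator series
    have hSn : Summable (fun i => mn n i • opAdj (Λn n i) (Θn n i g)) := by
      refine summable_of_partial_bound (r := 1 / q) (hΘn n g).1
        (fun i => Real.rpow_nonneg (norm_nonneg _) _)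
        (by positivity : (0:ℝ) ≤ Mn * B₁) (by positivity) fun t => ?_
      exact multiplier_partial_sum_bound hpq' (Λn n) (Θn n) (mn n) hMn hB₁.le
        (fun t x => finset_lp_le hp0 (fun i => norm_nonneg _) (hΛn n x).1 (hΛn n x).2 t) g t
    have hS : Summable (fun i => m i • opAdj (Λ i) (Θ i g)) := by
      refine summable_of_partial_bound (r := 1 / q) (hΘ g).1
        (fun i => Real.rpow_nonneg (norm_nonneg _) _)
        (by positivity : (0:ℝ) ≤ Mp * BΛ) (by positivity) fun t => ?_
      exact multiplier_partial_sum_bound hpq' Λ Θ m hmM hBΛ.le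
        (fun t x => finset_lp_le hp0 (fun i => norm_nonneg _) (hΛ x).1 (hΛ x).2 t) g t
    refine ⟨hSn, hS, ?_⟩
    -- the norm bound
    have hCn0 : (0:ℝ) ≤ B₁ * B₂ * δm n + B₂ * Mp * δΛ n + BΛ * Mp * δΘ n := by
      have := hδm0 n; have := hδΛ0 n; have := hδΘ0 n; positivity
    refine ContinuousLinearMap.opNorm_le_bound _ (by positivity) fun x => ?_
    -- scalar-level analysis at the point x
    -- Hölder products
    have hab : (Summable fun i => ‖Θn n i g‖ * ‖Λn n i x‖) ∧
        ∑' i, ‖Θn n i g‖ * ‖Λn n i x‖ ≤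
          (∑' i, ‖Θn n i g‖ ^ q) ^ (1 / q) * (∑' i, ‖Λn n i x‖ ^ p) ^ (1 / p) :=
      Real.summable_and_inner_le_Lp_mul_Lq_tsum_of_nonneg hpq'.symm (fun i => norm_nonneg _)
        (fun i => norm_nonneg _) (hΘn n g).1 (hΛn n x).1
    have habbd : ∑' i, ‖Θn n i g‖ * ‖Λn n i x‖ ≤ (B₂ * ‖g‖) * (B₁ * ‖x‖) := by
      refine hab.2.trans ?_
      refine mul_le_mul (hΘn n g).2 (hΛn n x).2
        (Real.rpow_nonneg (tsum_nonneg fun i => Real.rpow_nonneg (norm_nonneg _) _) _)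
        (by positivity)
    have hab' : (Summable fun i => ‖Θ i g‖ * ‖Λ i x‖) ∧
        ∑' i, ‖Θ i g‖ * ‖Λ i x‖ ≤
          (∑' i, ‖Θ i g‖ ^ q) ^ (1 / q) * (∑' i, ‖Λ i x‖ ^ p) ^ (1 / p) :=
      Real.summable_and_inner_le_Lp_mul_Lq_tsum_of_nonneg hpq'.symm (fun i => norm_nonneg _)
        (fun i => norm_nonneg _) (hΘ g).1 (hΛ x).1
    have hmΛ : (Summable fun i => |m i| * ‖Λn n i - Λ i‖) ∧
        ∑' i, |m i| * ‖Λn n i - Λ i‖ ≤ Mp * δΛ n :=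
      Real.summable_and_inner_le_Lp_mul_Lq_tsum_of_nonneg hpq₁' (fun i => abs_nonneg _)
        (fun i => norm_nonneg _) hm (hΛdiffsum n)
    have hmΘ : (Summable fun i => |m i| * ‖Θn n i - Θ i‖) ∧
        ∑' i, |m i| * ‖Θn n i - Θ i‖ ≤ Mp * δΘ n :=
      Real.summable_and_inner_le_Lp_mul_Lq_tsum_of_nonneg hpq₁' (fun i => abs_nonneg _)
        (fun i => norm_nonneg (Θn n i - Θ i)) hm (hΘdiffsum n)
    -- coordinatewise bounds
    have hΘnc : ∀ i, ‖Θn n i g‖ ≤ B₂ * ‖g‖ :=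
      coord_le_of_lp hq0 (fun i => norm_nonneg _) (hΘn n g).1 (hΘn n g).2
    have hΛc : ∀ i, ‖Λ i x‖ ≤ BΛ * ‖x‖ :=
      coord_le_of_lp hp0 (fun i => norm_nonneg _) (hΛ x).1 (hΛ x).2
    have hmnM : ∀ i, |mn n i - m i| ≤ δm n :=
      coord_le_of_lp hp₁0 (fun i => abs_nonneg _) (hmdiffsum n) le_rfl
    -- the three scalar pieces
    set T1 : ℕ → ℝ := fun i => (mn n i - m i) * (Θn n i g) (Λn n i x) with hT1def
    set T2 : ℕ → ℝ := fun i => m i * (Θn n i g) ((Λn n i - Λ i) x) with hT2def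
    set T3 : ℕ → ℝ := fun i => m i * ((Θn n i - Θ i) g) (Λ i x) with hT3def
    have hT1b : ∀ i, |T1 i| ≤ δm n * (‖Θn n i g‖ * ‖Λn n i x‖) := by
      intro i
      rw [hT1def, abs_mul]
      refine mul_le_mul (hmnM i) ?_ (abs_nonneg _) (hδm0 n)
      simpa [Real.norm_eq_abs] using (Θn n i g).le_opNorm (Λn n i x)
    have hT2b : ∀ i, |T2 i| ≤ (|m i| * ‖Λn n i - Λ i‖) * ((B₂ * ‖g‖) * ‖x‖) := by
      intro i
      rw [hT2def, abs_mul]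
      have h1 : |(Θn n i g) ((Λn n i - Λ i) x)| ≤ ‖Θn n i g‖ * ‖(Λn n i - Λ i) x‖ := by
        simpa [Real.norm_eq_abs] using (Θn n i g).le_opNorm ((Λn n i - Λ i) x)
      have h2 : ‖(Λn n i - Λ i) x‖ ≤ ‖Λn n i - Λ i‖ * ‖x‖ :=
        (Λn n i - Λ i).le_opNorm x
      calc |m i| * |(Θn n i g) ((Λn n i - Λ i) x)|
          ≤ |m i| * (‖Θn n i g‖ * ‖(Λn n i - Λ i) x‖) :=
            mul_le_mul_of_nonneg_left h1 (abs_nonneg _)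
        _ ≤ |m i| * ((B₂ * ‖g‖) * (‖Λn n i - Λ i‖ * ‖x‖)) := by
            refine mul_le_mul_of_nonneg_left ?_ (abs_nonneg _)
            exact mul_le_mul (hΘnc i) h2 (norm_nonneg _) (by positivity)
        _ = (|m i| * ‖Λn n i - Λ i‖) * ((B₂ * ‖g‖) * ‖x‖) := by ring
    have hT3b : ∀ i, |T3 i| ≤ (|m i| * ‖Θn n i - Θ i‖) * (‖g‖ * (BΛ * ‖x‖)) := by
      intro i
      rw [hT3def, abs_mul]
      have h1 : |((Θn n i - Θ i) g) (Λ i x)| ≤ ‖(Θn n i - Θ i) g‖ * ‖Λ i x‖ := by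
        simpa [Real.norm_eq_abs] using ((Θn n i - Θ i) g).le_opNorm (Λ i x)
      have h2 : ‖(Θn n i - Θ i) g‖ ≤ ‖Θn n i - Θ i‖ * ‖g‖ :=
        (Θn n i - Θ i).le_opNorm g
      calc |m i| * |((Θn n i - Θ i) g) (Λ i x)|
          ≤ |m i| * (‖(Θn n i - Θ i) g‖ * ‖Λ i x‖) :=
            mul_le_mul_of_nonneg_left h1 (abs_nonneg _)
        _ ≤ |m i| * ((‖Θn n i - Θ i‖ * ‖g‖) * (BΛ * ‖x‖)) := by
            refine mul_le_mul_of_nonneg_left ?_ (abs_nonneg _)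
            exact mul_le_mul h2 (hΛc i) (norm_nonneg _) (by positivity)
        _ = (|m i| * ‖Θn n i - Θ i‖) * (‖g‖ * (BΛ * ‖x‖)) := by ring
    -- summability of the pieces
    have hu1 : Summable fun i => δm n * (‖Θn n i g‖ * ‖Λn n i x‖) := hab.1.mul_left _
    have hu2 : Summable fun i => (|m i| * ‖Λn n i - Λ i‖) * ((B₂ * ‖g‖) * ‖x‖) :=
      hmΛ.1.mul_right _
    have hu3 : Summable fun i => (|m i| * ‖Θn n i - Θ i‖) * (‖g‖ * (BΛ * ‖x‖)) :=
      hmΘ.1.mul_right _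
    have hT1s : Summable T1 := by
      refine Summable.of_norm_bounded hu1 fun i => ?_
      simpa [Real.norm_eq_abs] using hT1b i
    have hT2s : Summable T2 := by
      refine Summable.of_norm_bounded hu2 fun i => ?_
      simpa [Real.norm_eq_abs] using hT2b i
    have hT3s : Summable T3 := by
      refine Summable.of_norm_bounded hu3 fun i => ?_
      simpa [Real.norm_eq_abs] using hT3b i
    -- bounds on the tsums of the pieces
    have hT1t : |∑' i, T1 i| ≤ δm n * ((B₂ * ‖g‖) * (B₁ * ‖x‖)) := by
      refine abs_tsum_le_of_dom hu1 hT1b ?_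
      rw [tsum_mul_left]
      exact mul_le_mul_of_nonneg_left habbd (hδm0 n)
    have hT2t : |∑' i, T2 i| ≤ (Mp * δΛ n) * ((B₂ * ‖g‖) * ‖x‖) := by
      refine abs_tsum_le_of_dom hu2 hT2b ?_
      rw [tsum_mul_right]
      exact mul_le_mul_of_nonneg_right hmΛ.2 (by positivity)
    have hT3t : |∑' i, T3 i| ≤ (Mp * δΘ n) * (‖g‖ * (BΛ * ‖x‖)) := by
      refine abs_tsum_le_of_dom hu3 hT3b ?_
      rw [tsum_mul_right]
      exact mul_le_mul_of_nonneg_right hmΘ.2 (by positivity)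
    -- scalar summability of the evaluated series
    have hSnx : Summable fun i => mn n i * (Θn n i g) (Λn n i x) := by
      refine Summable.of_norm_bounded (hab.1.mul_left Mn) fun i => ?_
      rw [Real.norm_eq_abs, abs_mul]
      refine mul_le_mul (hMn i) ?_ (abs_nonneg _) hMn0
      simpa [Real.norm_eq_abs] using (Θn n i g).le_opNorm (Λn n i x)
    have hSx : Summable fun i => m i * (Θ i g) (Λ i x) := by
      refine Summable.of_norm_bounded (hab'.1.mul_left Mp) fun i => ?_
      rw [Real.norm_eq_abs, abs_mul]
      refine mul_le_mul (hmM i) ?_ (abs_nonneg _) hMp0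
      simpa [Real.norm_eq_abs] using (Θ i g).le_opNorm (Λ i x)
    -- evaluate the operator tsums at x
    have happly : ((∑' i, mn n i • opAdj (Λn n i) (Θn n i g)) -
        ∑' i, m i • opAdj (Λ i) (Θ i g)) x
        = (∑' i, mn n i * (Θn n i g) (Λn n i x)) - ∑' i, m i * (Θ i g) (Λ i x) := by
      have e1 : (∑' i, mn n i • opAdj (Λn n i) (Θn n i g)) x
          = ∑' i, mn n i * (Θn n i g) (Λn n i x) := by
        have := (ContinuousLinearMap.apply ℝ ℝ x).map_tsum hSn
        simpa [opAdj_apply, smul_eq_mul] using this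
      have e2 : (∑' i, m i • opAdj (Λ i) (Θ i g)) x
          = ∑' i, m i * (Θ i g) (Λ i x) := by
        have := (ContinuousLinearMap.apply ℝ ℝ x).map_tsum hS
        simpa [opAdj_apply, smul_eq_mul] using this
      rw [ContinuousLinearMap.sub_apply, e1, e2]
    -- the termwise decomposition
    have hdecomp : ∀ i, mn n i * (Θn n i g) (Λn n i x) - m i * (Θ i g) (Λ i x)
        = T1 i + T2 i + T3 i := by
      intro i
      rw [hT1def, hT2def, hT3def]
      simp only [ContinuousLinearMap.sub_apply, map_sub]
      ring
    have hsplit : (∑' i, mn n i * (Θn n i g) (Λn n i x)) - (∑' i, m i * (Θ i g) (Λ i x))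
        = (∑' i, T1 i) + (∑' i, T2 i) + (∑' i, T3 i) := by
      rw [← hSnx.tsum_sub hSx]
      rw [tsum_congr hdecomp]
      rw [(hT1s.add hT2s).tsum_add hT3s, hT1s.tsum_add hT2s]
    -- putting everything together
    rw [Real.norm_eq_abs, happly, hsplit]
    calc |(∑' i, T1 i) + (∑' i, T2 i) + (∑' i, T3 i)|
        ≤ |∑' i, T1 i| + |∑' i, T2 i| + |∑' i, T3 i| := by
          exact (abs_add_le _ _).trans (by gcongr; exact abs_add_le _ _)
      _ ≤ δm n * ((B₂ * ‖g‖) * (B₁ * ‖x‖)) + (Mp * δΛ n) * ((B₂ * ‖g‖) * ‖x‖)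
            + (Mp * δΘ n) * (‖g‖ * (BΛ * ‖x‖)) := by
          exact add_le_add (add_le_add hT1t hT2t) hT3t
      _ = (B₁ * B₂ * δm n + B₂ * Mp * δΛ n + BΛ * Mp * δΘ n) * ‖g‖ * ‖x‖ := by ring
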